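/- Let n and r be positive integers, let w ∈ S(n,r), and let k ∈ {1,…,n−1} be a double ascent of w. Let ℓ be the smallest index with k < ℓ < n and w_{ℓ+1} < w_k (such ℓ exists). If w_k < w_ℓ, then the word w'' = (w''_0, w''_1, …, w''_n) defined by w''_ℓ = w_k, w''_{i−1} = w_i for k < i ≤ ℓ, and w''_i = w_i for all other indices i, belongs to S(n,r) and satisfies asc(w'') = asc(w) − 1. -/

import Mathlib

open scoped Classical

noncomputable section

/-- Value of a word `w : Fin (n+1) → ℕ` at a natural index (junk value `0` out of range). -/
def wv {n : ℕ} (w : Fin (n + 1) → ℕ) (k : ℕ) : ℕ :=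
  if h : k < n + 1 then w ⟨k, h⟩ else 0

/-- The number of ascents of a word `w = (w_0, w_1, …, w_n)`, i.e. the number of indices
`i ∈ {0,…,n-1}` with `w_i < w_{i+1}`. -/
def asc {n : ℕ} (w : Fin (n + 1) → ℕ) : ℕ :=
  ((Finset.range n).filter fun i => wv w i < wv w (i + 1)).card

/-- The set `S(n,r)` of Smirnov words `w = (w_0, …, w_n) ∈ {0,…,r-1}^{n+1}` with
`w_0 = w_n = 0` and no two consecutive entries equal. -/
def smirnov (n r : ℕ) : Finset (Fin (n + 1) → ℕ) :=
  (Fintype.piFinset fun _ => Finset.range r).filter fun w =>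
    wv w 0 = 0 ∧ wv w n = 0 ∧ ∀ i < n, wv w i ≠ wv w (i + 1)

/-- `k ∈ {1,…,n-1}` is a double ascent of `w` if `w_{k-1} < w_k < w_{k+1}`. -/
def doubleAscent {n : ℕ} (w : Fin (n + 1) → ℕ) (k : ℕ) : Prop :=
  1 ≤ k ∧ k < n ∧ wv w (k - 1) < wv w k ∧ wv w k < wv w (k + 1)

/-- `k ∈ {1,…,n-1}` is a double descent of `w` if `w_{k-1} > w_k > w_{k+1}`. -/
def doubleDescent {n : ℕ} (w : Fin (n + 1) → ℕ) (k : ℕ) : Prop :=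
  1 ≤ k ∧ k < n ∧ wv w k < wv w (k - 1) ∧ wv w (k + 1) < wv w k

/-- `w` has the matching property: for every double ascent `k` of `w` there is a double
descent `ℓ > k` with `w_k = w_ℓ` and `w_k ≤ w_j` for all `k < j < ℓ`. -/
def hasMatching {n : ℕ} (w : Fin (n + 1) → ℕ) : Prop :=
  ∀ k, doubleAscent w k →
    ∃ l, k < l ∧ doubleDescent w l ∧ wv w k = wv w l ∧
      ∀ j, k < j → j < l → wv w k ≤ wv w j

/-- The set of indices `ℓ` with `k < ℓ < n` and `w_{ℓ+1} < w_k`. -/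
def rightSet {n : ℕ} (w : Fin (n + 1) → ℕ) (k : ℕ) : Set ℕ :=
  {l | k < l ∧ l < n ∧ wv w (l + 1) < wv w k}

/-- The set of indices `ℓ` with `1 ≤ ℓ < k` and `w_{ℓ-1} < w_k`. -/
def leftSet {n : ℕ} (w : Fin (n + 1) → ℕ) (k : ℕ) : Set ℕ :=
  {l | 1 ≤ l ∧ l < k ∧ wv w (l - 1) < wv w k}

/-- The word `w'` obtained from `w` by deleting `w_k` and inserting it between
`w_{ℓ-1}` and `w_ℓ` (for `ℓ < k`): `w'_ℓ = w_k`, `w'_{i+1} = w_i` for `ℓ ≤ i < k`,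
and `w'_i = w_i` for all other indices. -/
def leftMove {n : ℕ} (w : Fin (n + 1) → ℕ) (k l : ℕ) : Fin (n + 1) → ℕ :=
  fun i => if (i : ℕ) = l then wv w k
    else if l < (i : ℕ) ∧ (i : ℕ) ≤ k then wv w ((i : ℕ) - 1) else w i

/-- The word `w''` obtained from `w` by deleting `w_k` and inserting it between
`w_ℓ` and `w_{ℓ+1}` (for `k < ℓ`): `w''_ℓ = w_k`, `w''_{i-1} = w_i` for `k < i ≤ ℓ`,
and `w''_i = w_i` for all other indices. -/
def rightMove {n : ℕ} (w : Fin (n + 1) → ℕ) (k l : ℕ) : Fin (n + 1) → ℕ :=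
  fun i => if (i : ℕ) = l then wv w k
    else if k ≤ (i : ℕ) ∧ (i : ℕ) < l then wv w ((i : ℕ) + 1) else w i

lemma wv_eq_val {n : ℕ} (w : Fin (n + 1) → ℕ) (i : ℕ) (h : i < n + 1) :
    wv w i = w ⟨i, h⟩ := dif_pos h

lemma wv_rightMove {n : ℕ} (w : Fin (n + 1) → ℕ) (k l : ℕ) (hl : l < n) (i : ℕ) :
    wv (rightMove w k l) i =
      if i = l then wv w k else if k ≤ i ∧ i < l then wv w (i + 1) else wv w i := by
  by_cases h : i < n + 1
  · rw [wv_eq_val _ i h, wv_eq_val w i h]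
    show (if i = l then wv w k else if k ≤ i ∧ i < l then wv w (i + 1)
        else w ⟨i, h⟩) = _
    split_ifs <;> rfl
  · have h1 : ¬ (i = l) := by omega
    have h2 : ¬ (k ≤ i ∧ i < l) := by omega
    rw [if_neg h1, if_neg h2]
    unfold wv
    rw [dif_neg h, dif_neg h]


/-- For `w ∈ S(n,r)` and a double ascent `k` of `w`: the set of indices `ℓ` with
`k < ℓ < n` and `w_{ℓ+1} < w_k` is nonempty, and if its smallest element `ℓ` satisfies
`w_k < w_ℓ`, then the right match `w''` (obtained by deleting `w_k` and inserting it
between `w_ℓ` and `w_{ℓ+1}`) belongs to `S(n,r)` and has exactly one less ascent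
than `w`. -/
theorem rightMatch_mem_and_asc (n r : ℕ) (hn : 0 < n) (hr : 0 < r)
    (w : Fin (n + 1) → ℕ) (hw : w ∈ smirnov n r) (k : ℕ) (hk : doubleAscent w k) :
    (rightSet w k).Nonempty ∧
    (wv w k < wv w (sInf (rightSet w k)) →
      rightMove w k (sInf (rightSet w k)) ∈ smirnov n r ∧
        asc (rightMove w k (sInf (rightSet w k))) + 1 = asc w) := by
  rw [smirnov, Finset.mem_filter, Fintype.mem_piFinset] at hw
  obtain ⟨hpi, hw0, hwn, hne⟩ := hw
  have hwr : ∀ j, wv w j < r := by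
    intro j
    unfold wv
    split
    · exact Finset.mem_range.mp (hpi _)
    · exact hr
  obtain ⟨hk1, hk2, ha1, ha2⟩ := hk
  have hk3 : k + 1 < n := by
    rcases Nat.lt_or_ge (k + 1) n with h | h
    · exact h
    · exfalso
      have hkn : k + 1 = n := by omega
      rw [hkn, hwn] at ha2
      omega
  have hne' : (rightSet w k).Nonempty := by
    refine ⟨n - 1, ?_, ?_, ?_⟩
    · omega
    · omega
    · have h1 : n - 1 + 1 = n := by omega
      rw [h1, hwn]
      omega
  refine ⟨hne', fun hkl => ?_⟩
  set l := sInf (rightSet w k) with hldef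
  obtain ⟨hl1, hl2, hl3⟩ : k < l ∧ l < n ∧ wv w (l + 1) < wv w k := Nat.sInf_mem hne'
  have hge : ∀ j, k < j → j ≤ l → wv w k ≤ wv w j := by
    intro j hj1 hj2
    by_cases h : j = k + 1
    · rw [h]; omega
    · have hnm : j - 1 ∉ rightSet w k := Nat.notMem_of_lt_sInf (by rw [← hldef]; omega)
      simp only [rightSet, Set.mem_setOf_eq, not_and, not_lt] at hnm
      have h3 := hnm (by omega) (by omega)
      have h4 : j - 1 + 1 = j := by omega
      rwa [h4] at h3
  have hWv := wv_rightMove w k l hl2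
  have hmem : rightMove w k l ∈ smirnov n r := by
    rw [smirnov, Finset.mem_filter, Fintype.mem_piFinset]
    refine ⟨?_, ?_, ?_, ?_⟩
    · intro a
      rw [Finset.mem_range]
      have h1 : rightMove w k l a = wv (rightMove w k l) (a : ℕ) :=
        (wv_eq_val _ _ a.isLt).symm
      rw [h1, hWv]
      split_ifs <;> exact hwr _
    · rw [hWv]
      have h1 : ¬ ((0:ℕ) = l) := by omega
      have h2 : ¬ (k ≤ (0:ℕ) ∧ (0:ℕ) < l) := by omega
      rw [if_neg h1, if_neg h2, hw0]
    · rw [hWv]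
      have h1 : ¬ (n = l) := by omega
      have h2 : ¬ (k ≤ n ∧ n < l) := by omega
      rw [if_neg h1, if_neg h2, hwn]
    · intro i hi
      rw [hWv i, hWv (i + 1)]
      split_ifs with c1 c2 c3 c4 c5 c6 c7 c8 <;> try omega
      · -- i = l, else-else : wv w k ≠ wv w (i+1), with i = l
        subst c1
        omega
      · -- k ≤ i < l, i+1 = l : wv w (i+1) ≠ wv w k, i.e. wv w l ≠ wv w k
        rw [c5]
        omega
      · -- k ≤ i < l, k ≤ i+1 < l : wv w (i+1) ≠ wv w (i+1+1)
        exact hne (i + 1) (by omega)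
      · -- i < k, i+1 = k case: wv w i ≠ wv w (i+1+1)
        have hik : i + 1 = k := by omega
        subst hik
        have h5 : i + 1 - 1 = i := by omega
        rw [h5] at ha1
        omega
      · -- untouched: wv w i ≠ wv w (i+1)
        exact hne i hi
  refine ⟨hmem, ?_⟩
  unfold asc
  set W := rightMove w k l with hWdef
  set A := (Finset.range n).filter (fun i => wv w i < wv w (i + 1)) with hA
  set B := (Finset.range n).filter (fun i => wv W i < wv W (i + 1)) with hB
  have hkA : k ∈ A := by
    rw [hA, Finset.mem_filter, Finset.mem_range]
    exact ⟨hk2, ha2⟩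
  have hlnB : l ∉ B := by
    rw [hB, Finset.mem_filter]
    rintro ⟨-, hasc⟩
    rw [hWv l, hWv (l + 1)] at hasc
    have e1 : (l = l) := rfl
    rw [if_pos e1] at hasc
    have e2 : ¬ (l + 1 = l) := by omega
    have e3 : ¬ (k ≤ l + 1 ∧ l + 1 < l) := by omega
    rw [if_neg e2, if_neg e3] at hasc
    omega
  have hcard : B.card = (A.erase k).card := by
    apply Finset.card_nbij' (fun j => if k ≤ j ∧ j < l then j + 1 else j)
      (fun a => if k < a ∧ a ≤ l then a - 1 else a)
    · -- maps B into A.erase k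
      intro j hj
      simp only [Finset.mem_coe] at hj ⊢
      have hjl : j ≠ l := fun h => hlnB (h ▸ hj)
      rw [hB, Finset.mem_filter, Finset.mem_range] at hj
      obtain ⟨hjn, hasc⟩ := hj
      rw [hWv j, hWv (j + 1)] at hasc
      rw [Finset.mem_erase, hA, Finset.mem_filter, Finset.mem_range]
      split_ifs at hasc with c1 c2 c3 c4 c5 c6 c7 c8 <;> try omega
      · -- k ≤ j < l, j+1 = l : wv w (j+1) < wv w k, but wv w l > wv w k
        exfalso
        rw [c5] at hasc
        omega
      · -- k ≤ j < l, k ≤ j+1 < l: hasc : wv w (j+1) < wv w (j+1+1)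
        have e : (if k ≤ j ∧ j < l then j + 1 else j) = j + 1 := if_pos c4
        rw [e]
        exact ⟨by omega, by omega, hasc⟩
      · -- j < k, j + 1 = k branch (k ≤ j+1 < l with ¬(k ≤ j ∧ j < l))
        have e : (if k ≤ j ∧ j < l then j + 1 else j) = j := by
          rw [if_neg]; omega
        rw [e]
        have hjk : j + 1 = k := by omega
        subst hjk
        have h5 : j + 1 - 1 = j := by omega
        rw [h5] at ha1
        exact ⟨by omega, by omega, ha1⟩
      · -- untouched branch
        have e : (if k ≤ j ∧ j < l then j + 1 else j) = j := by
          rw [if_neg]; omega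
        rw [e]
        refine ⟨?_, by omega, hasc⟩
        -- j ≠ k : from ¬(k ≤ j ∧ j < l) and j ≠ l
        omega
    · -- maps A.erase k into B
      intro a ha
      simp only [Finset.mem_coe] at ha ⊢
      rw [Finset.mem_erase, hA, Finset.mem_filter, Finset.mem_range] at ha
      obtain ⟨hak, han, hasc⟩ := ha
      have hal : a ≠ l := by
        intro h
        rw [h] at hasc
        omega
      rw [hB, Finset.mem_filter, Finset.mem_range]
      by_cases hmid : k < a ∧ a ≤ l
      · have e : (if k < a ∧ a ≤ l then a - 1 else a) = a - 1 := if_pos hmid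
        rw [e]
        refine ⟨by omega, ?_⟩
        have e1 : a - 1 + 1 = a := by omega
        rw [e1, hWv (a - 1), hWv a]
        have f1 : ¬ (a - 1 = l) := by omega
        have f2 : k ≤ a - 1 ∧ a - 1 < l := by omega
        have f3 : ¬ (a = l) := hal
        have f4 : k ≤ a ∧ a < l := by omega
        rw [if_neg f1, if_pos f2, if_neg f3, if_pos f4, e1]
        exact hasc
      · have e : (if k < a ∧ a ≤ l then a - 1 else a) = a := if_neg hmid
        rw [e]
        refine ⟨han, ?_⟩
        rw [hWv a, hWv (a + 1)]
        have f1 : ¬ (a = l) := hal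
        have f2 : ¬ (k ≤ a ∧ a < l) := by omega
        rw [if_neg f1, if_neg f2]
        have f3 : ¬ (a + 1 = l) := by omega
        rw [if_neg f3]
        by_cases f4 : k ≤ a + 1 ∧ a + 1 < l
        · rw [if_pos f4]
          have hak' : a + 1 = k := by omega
          rw [hak'] at hasc ⊢
          omega
        · rw [if_neg f4]
          exact hasc
    · -- left inverse
      intro j hj
      simp only [Finset.mem_coe] at hj ⊢
      have hjl : j ≠ l := fun h => hlnB (h ▸ hj)
      by_cases c : k ≤ j ∧ j < l
      · rw [if_pos c, if_pos (by omega : k < j + 1 ∧ j + 1 ≤ l)]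
        omega
      · rw [if_neg c, if_neg (by omega : ¬ (k < j ∧ j ≤ l))]
    · -- right inverse
      intro a ha
      simp only [Finset.mem_coe] at ha ⊢
      rw [Finset.mem_erase] at ha
      have hak : a ≠ k := ha.1
      by_cases c : k < a ∧ a ≤ l
      · rw [if_pos c, if_pos (by omega : k ≤ a - 1 ∧ a - 1 < l)]
        omega
      · rw [if_neg c, if_neg (by omega : ¬ (k ≤ a ∧ a < l))]
  rw [hcard, Finset.card_erase_of_mem hkA]
  have : 0 < A.card := Finset.card_pos.mpr ⟨k, hkA⟩
  omega
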